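/- Chain connectivity of Voronoi cells under a density assumption: let d ≥ 1, R > 0, and let P ⊆ ℝ^d be a nonempty locally finite set (P ∩ K is finite for every bounded K ⊆ ℝ^d) such that every point of Λ_{5R} := [−5R,5R]^d lies within Euclidean distance R/10 of some point of P. Then for every pair of distinct points x, y ∈ P ∩ Λ_{3R}, there exist an integer M with 1 ≤ M ≤ #(P ∩ Λ_{4R}) and distinct points x = x₀, x₁, …, x_M = y, all belonging to P ∩ Λ_{4R}, such that Vor(x_i, P) ∩ Vor(x_{i+1}, P) ≠ ∅ for every 0 ≤ i ≤ M−1. -/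

import Mathlib

/-!
Statement 19: chain connectivity of Voronoi cells under a density assumption
(Lemma 6.1(ii) of the paper).
-/

open Metric

namespace Voronoi

/-- Points of `ℝ^d` with the Euclidean metric. -/
abbrev Pt (d : ℕ) := EuclideanSpace ℝ (Fin d)

/-- The Voronoi cell of `x` with respect to the set `P`:
`Vor(x,P) = {z : |z - x| ≤ |z - y| for all y ∈ P}`. -/
def vor {d : ℕ} (P : Set (Pt d)) (x : Pt d) : Set (Pt d) :=
  {z | ∀ y ∈ P, dist z x ≤ dist z y}

/-- The cube `Λ_s = [-s,s]^d`. -/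
def cube (d : ℕ) (s : ℝ) : Set (Pt d) := {z | ∀ i, |z i| ≤ s}

lemma abs_coord_le_dist {d : ℕ} (a b : Pt d) (i : Fin d) : |a i - b i| ≤ dist a b := by
  rw [EuclideanSpace.dist_eq]
  have h1 : |a i - b i| = Real.sqrt (dist (a i) (b i) ^ 2) := by
    rw [Real.dist_eq, Real.sqrt_sq_eq_abs, abs_abs]
  rw [h1]
  apply Real.sqrt_le_sqrt
  exact Finset.single_le_sum (f := fun j => dist (a j) (b j) ^ 2)
    (fun j _ => sq_nonneg _) (Finset.mem_univ i)

lemma walk_support_getElem {V : Type*} {G : SimpleGraph V} :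
    ∀ {u v : V} (p : G.Walk u v) (i : ℕ) (h : i < p.support.length), p.support[i] = p.getVert i
  | _, _, SimpleGraph.Walk.nil, 0, _ => rfl
  | _, _, SimpleGraph.Walk.cons _ _, 0, _ => rfl
  | _, _, SimpleGraph.Walk.cons hadj q, (i + 1), h => by
      simp only [SimpleGraph.Walk.support_cons, List.getElem_cons_succ,
        SimpleGraph.Walk.getVert_cons_succ]
      exact walk_support_getElem q i (by
        simpa [SimpleGraph.Walk.support_cons] using Nat.lt_of_succ_lt_succ h)

lemma isClosed_vor {d : ℕ} (P : Set (Pt d)) (p : Pt d) : IsClosed (vor P p) := by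
  have : vor P p = ⋂ q ∈ P, {z : Pt d | dist z p ≤ dist z q} := by
    ext z; simp [vor]
  rw [this]
  exact isClosed_biInter fun q _ =>
    isClosed_le (Continuous.dist continuous_id continuous_const)
      (Continuous.dist continuous_id continuous_const)

lemma cube_bounded {d : ℕ} {s : ℝ} (hs : 0 ≤ s) :
    Bornology.IsBounded (cube d s) := by
  apply (Metric.isBounded_closedBall (x := (0 : Pt d)) (r := Real.sqrt (d * s ^ 2))).subset
  intro z hz
  rw [Metric.mem_closedBall, dist_zero_right, EuclideanSpace.norm_eq]
  apply Real.sqrt_le_sqrt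
  calc ∑ i, ‖z i‖ ^ 2 ≤ ∑ _i : Fin d, s ^ 2 := by
        apply Finset.sum_le_sum
        intro i _
        have := hz i
        have h0 : ‖z i‖ = |z i| := rfl
        nlinarith [abs_nonneg (z i)]
    _ = d * s ^ 2 := by simp [Finset.sum_const, nsmul_eq_mul]

/-- Every point of the cube `Λ_{3R}` lies in the Voronoi cell of some point of
`P ∩ Λ_{4R}`. -/
lemma exists_vor_mem {d : ℕ} {R : ℝ} (hR : 0 < R) {P : Set (Pt d)}
    (hlf : ∀ K : Set (Pt d), Bornology.IsBounded K → (P ∩ K).Finite)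
    (hdense : ∀ z ∈ cube d (5 * R), ∃ p ∈ P, dist z p ≤ R / 10)
    {z : Pt d} (hz : z ∈ cube d (3 * R)) :
    ∃ p ∈ P ∩ cube d (4 * R), z ∈ vor P p := by
  have hz5 : z ∈ cube d (5 * R) := fun i => (hz i).trans (by linarith)
  obtain ⟨p0, hp0P, hp0d⟩ := hdense z hz5
  set S : Set (Pt d) := P ∩ Metric.closedBall z (R / 10) with hS
  have hSfin : S.Finite := hlf _ Metric.isBounded_closedBall
  have hp0S : p0 ∈ S := ⟨hp0P, by rwa [Metric.mem_closedBall, dist_comm]⟩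
  obtain ⟨p, hpS, hpmin⟩ := hSfin.toFinset.exists_min_image (fun q => dist z q)
    ⟨p0, hSfin.mem_toFinset.mpr hp0S⟩
  rw [Set.Finite.mem_toFinset] at hpS
  have hpd : dist z p ≤ R / 10 := by
    have := hpS.2; rwa [Metric.mem_closedBall, dist_comm] at this
  refine ⟨p, ⟨hpS.1, ?_⟩, ?_⟩
  · intro i
    have h1 : |p i| ≤ |z i| + |p i - z i| := by
      have := abs_add_le (z i) (p i - z i); simpa using (by simpa using this)
    have h2 : |p i - z i| ≤ dist p z := abs_coord_le_dist p z i
    have h3 : dist p z ≤ R / 10 := by rwa [dist_comm]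
    have := hz i
    linarith
  · intro q hqP
    by_cases hq : dist q z ≤ R / 10
    · exact hpmin q (hSfin.mem_toFinset.mpr ⟨hqP, Metric.mem_closedBall.mpr hq⟩)
    · have : dist z p ≤ dist z p0 :=
        hpmin p0 (hSfin.mem_toFinset.mpr hp0S)
      rw [dist_comm q z] at hq
      linarith

/-- Let `d ≥ 1`, `R > 0` and let `P ⊆ ℝ^d` be a nonempty locally finite
set such that every point of `Λ_{5R}` lies within distance `R/10` of `P`.  Then any two
distinct points `x, y ∈ P ∩ Λ_{3R}` are joined by a chain `x = x₀, x₁, …, x_M = y` of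
distinct points of `P ∩ Λ_{4R}`, with `1 ≤ M ≤ #(P ∩ Λ_{4R})`, whose consecutive Voronoi
cells intersect. -/
theorem voronoi_chain (d : ℕ) (hd : 1 ≤ d) (R : ℝ) (hR : 0 < R)
    (P : Set (Pt d)) (hP : P.Nonempty)
    (hlf : ∀ K : Set (Pt d), Bornology.IsBounded K → (P ∩ K).Finite)
    (hdense : ∀ z ∈ cube d (5 * R), ∃ p ∈ P, dist z p ≤ R / 10)
    (x y : Pt d) (hx : x ∈ P ∩ cube d (3 * R)) (hy : y ∈ P ∩ cube d (3 * R))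
    (hxy : x ≠ y) :
    ∃ M : ℕ, 1 ≤ M ∧ M ≤ (P ∩ cube d (4 * R)).ncard ∧
      ∃ c : Fin (M + 1) → Pt d, Function.Injective c ∧
        c 0 = x ∧ c (Fin.last M) = y ∧
        (∀ i, c i ∈ P ∩ cube d (4 * R)) ∧
        (∀ i : Fin M, (vor P (c i.castSucc) ∩ vor P (c i.succ)).Nonempty) := by
  classical
  set F : Set (Pt d) := P ∩ cube d (4 * R) with hF
  have hFfin : F.Finite := hlf _ (cube_bounded (by linarith))
  haveI : Fintype ↥F := hFfin.fintype
  -- the graph on `F`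
  let G : SimpleGraph ↥F :=
    { Adj := fun a b => a ≠ b ∧ (vor P ↑a ∩ vor P ↑b).Nonempty
      symm := by
        constructor
        rintro a b ⟨hab, w, hw1, hw2⟩
        exact ⟨hab.symm, w, hw2, hw1⟩
      loopless := by constructor; rintro a ⟨hne, -⟩; exact hne rfl }
  have hxF : x ∈ F := ⟨hx.1, fun i => (hx.2 i).trans (by linarith)⟩
  have hyF : y ∈ F := ⟨hy.1, fun i => (hy.2 i).trans (by linarith)⟩
  set xv : ↥F := ⟨x, hxF⟩
  set yv : ↥F := ⟨y, hyF⟩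
  -- self-membership in Voronoi cells
  have hself : ∀ p ∈ P, p ∈ vor P p := by
    intro p hp q hq; rw [dist_self]; exact dist_nonneg
  -- the segment
  set γ : ℝ → Pt d := fun t => x + t • (y - x) with hγ
  have hγcont : Continuous γ := by continuity
  have hγ0 : γ 0 = x := by simp [hγ]
  have hγ1 : γ 1 = y := by simp [hγ]
  have hγcube : ∀ t ∈ Set.Icc (0:ℝ) 1, γ t ∈ cube d (3 * R) := by
    rintro t ⟨ht0, ht1⟩ i
    have hxi := hx.2 i
    have hyi := hy.2 i
    have happ : γ t i = x i + t * (y i - x i) := rfl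
    rw [happ]
    have h : x i + t * (y i - x i) = (1 - t) * x i + t * y i := by ring
    rw [h]
    calc |(1 - t) * x i + t * y i| ≤ |(1 - t) * x i| + |t * y i| := abs_add_le _ _
      _ = (1 - t) * |x i| + t * |y i| := by
          rw [abs_mul, abs_mul, abs_of_nonneg (by linarith : (0:ℝ) ≤ 1 - t),
            abs_of_nonneg ht0]
      _ ≤ (1 - t) * (3 * R) + t * (3 * R) := by
          apply add_le_add
          · exact mul_le_mul_of_nonneg_left hxi (by linarith)
          · exact mul_le_mul_of_nonneg_left hyi ht0
      _ = 3 * R := by ring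
  -- connectedness argument
  have hreach : G.Reachable xv yv := by
    set A : Set ℝ := ⋃ p ∈ {p : ↥F | G.Reachable xv p}, γ ⁻¹' (vor P ↑p) with hA
    set B : Set ℝ := ⋃ p ∈ {p : ↥F | ¬ G.Reachable xv p}, γ ⁻¹' (vor P ↑p) with hB
    have hAc : IsClosed A :=
      (Set.toFinite _).isClosed_biUnion fun p _ => (isClosed_vor P ↑p).preimage hγcont
    have hBc : IsClosed B :=
      (Set.toFinite _).isClosed_biUnion fun p _ => (isClosed_vor P ↑p).preimage hγcont
    have hcov : Set.Icc (0:ℝ) 1 ⊆ A ∪ B := by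
      intro t ht
      obtain ⟨p, hpF, hpv⟩ := exists_vor_mem hR hlf hdense (hγcube t ht)
      by_cases hre : G.Reachable xv ⟨p, hpF⟩
      · exact Or.inl (Set.mem_biUnion hre hpv)
      · exact Or.inr (Set.mem_biUnion hre hpv)
    have h0A : (0:ℝ) ∈ A := by
      refine Set.mem_biUnion (show xv ∈ {p : ↥F | G.Reachable xv p} from
        SimpleGraph.Reachable.refl xv) ?_
      show γ 0 ∈ vor P x
      rw [hγ0]; exact hself x hx.1
    -- no point of `Icc 0 1` is in `B`
    have hBempty : Set.Icc (0:ℝ) 1 ∩ B = ∅ := by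
      by_contra hne
      obtain ⟨t, htI, ht⟩ := isPreconnected_closed_iff.mp isPreconnected_Icc A B hAc hBc
        hcov ⟨0, ⟨le_refl 0, zero_le_one⟩, h0A⟩ (Set.nonempty_iff_ne_empty.mpr hne)
      obtain ⟨htA, htB⟩ := ht
      obtain ⟨p, hpre, hpv⟩ := by
        simpa only [hA, Set.mem_iUnion, Set.mem_setOf_eq, exists_prop] using htA
      obtain ⟨q, hqre, hqv⟩ := by
        simpa only [hB, Set.mem_iUnion, Set.mem_setOf_eq, exists_prop] using htB
      apply hqre
      rcases eq_or_ne p q with rfl | hpq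
      · exact hpre
      · exact hpre.trans (SimpleGraph.Adj.reachable
          (show G.Adj p q from ⟨hpq, γ t, hpv, hqv⟩))
    have h1A : (1:ℝ) ∈ A := by
      rcases hcov (Set.mem_Icc.mpr ⟨zero_le_one, le_refl 1⟩) with h | h
      · exact h
      · exact absurd (Set.mem_inter (Set.mem_Icc.mpr ⟨zero_le_one, le_refl 1⟩) h)
          (by rw [hBempty]; exact Set.notMem_empty 1)
    obtain ⟨p, hpre, hpv⟩ := by
      simpa only [hA, Set.mem_iUnion, Set.mem_setOf_eq, exists_prop] using h1A
    rcases eq_or_ne p yv with rfl | hpy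
    · exact hpre
    · refine hpre.trans (SimpleGraph.Adj.reachable
        (show G.Adj p yv from ⟨hpy, y, ?_, hself y hy.1⟩))
      rw [← hγ1]; exact hpv
  -- extract a path from reachability
  obtain ⟨w0⟩ := hreach
  set w := w0.bypass with hw
  have hpath : w.IsPath := w0.bypass_isPath
  set M := w.length with hM
  have hM1 : 1 ≤ M := by
    rcases Nat.eq_zero_or_pos M with h0 | h
    · exact absurd (congrArg Subtype.val (SimpleGraph.Walk.eq_of_length_eq_zero (p := w) h0)) hxy
    · exact h
  have hMcard : M ≤ F.ncard := by
    have := hpath.length_lt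
    have hcard : F.ncard = Fintype.card ↥F := by
      rw [Set.ncard_eq_toFinset_card', Set.toFinset_card]
    omega
  -- support access
  have hgetsup : ∀ i : ℕ, ∀ h : i < w.support.length, w.support[i] = w.getVert i :=
    fun i h => walk_support_getElem w i h
  have hsuplen : w.support.length = M + 1 := w.length_support
  have hginj : ∀ i j : ℕ, i ≤ M → j ≤ M → w.getVert i = w.getVert j → i = j := by
    intro i j hi hj hij
    have hi' : i < w.support.length := by omega
    have hj' : j < w.support.length := by omega
    have hinj := List.nodup_iff_injective_getElem.mp hpath.support_nodup
    have heq : (⟨i, hi'⟩ : Fin w.support.length) = ⟨j, hj'⟩ := hinj (by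
      show w.support[i] = w.support[j]
      rw [hgetsup i hi', hgetsup j hj', hij])
    exact Fin.mk.inj_iff.mp heq
  refine ⟨M, hM1, hMcard, fun i => ↑(w.getVert i), ?_, ?_, ?_, ?_, ?_⟩
  · intro i j hij
    have : w.getVert i = w.getVert j := Subtype.ext hij
    exact Fin.ext (hginj i j (by omega) (by omega) this)
  · show ((w.getVert 0 : ↥F) : Pt d) = x
    rw [w.getVert_zero]
  · show ((w.getVert M : ↥F) : Pt d) = y
    rw [w.getVert_length]
  · exact fun i => (w.getVert i).2
  · intro i
    have hadj := w.adj_getVert_succ (i := (i : ℕ)) i.isLt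
    exact hadj.2

end Voronoi
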